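/- Let 1 ≤ q < 2, let V be a real Banach space, let ω be a control function, and let Ω : [0,1] → L(V,V) satisfy ‖Ω(t) − Ω(s)‖ ≤ ω(s,t)^{1/q} for all 0 ≤ s ≤ t ≤ 1. Fix 0 < T ≤ 1 and set K := ω(0,T)^{1/q} (1 + 2^{2/q} ζ(2/q)). Define I^0(t) := Id_V and, recursively for n ≥ 0, I^{n+1}(t) := ∫_0^t dΩ · I^n, i.e. I^{n+1}(t) is the limit, as the mesh tends to 0, of the left-point Riemann–Stieltjes sums Σ_{i=1}^N (Ω(t_i) − Ω(t_{i−1})) ∘ I^n(t_{i−1}) over finite partitions {0 = t_0 < ⋯ < t_N = t}. Then all these limits exist, and for every n ≥ 1 and all 0 ≤ s ≤ t ≤ T, ‖I^n(t) − I^n(s)‖ ≤ K^{n−1} ω(s,t)^{1/q}. -/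

import Mathlib

/-!
STATEMENT 4: existence and estimates of the iterated Young integrals `I^n` of an operator-valued
path `Ω` of finite `q`-variation.
-/

universe u

/-- A finite partition of the interval `[s,t]`: monotone points `pt 0 = s ≤ ⋯ ≤ pt N = t`. -/
structure Subdivision (s t : ℝ) where
  N : ℕ
  pt : ℕ → ℝ
  pos : 0 < N
  first : pt 0 = s
  last : pt N = t
  mono : ∀ i, i < N → pt i ≤ pt (i + 1)

/-- The mesh of a partition: the largest length of a subinterval. -/
noncomputable def Subdivision.mesh {s t : ℝ} (P : Subdivision s t) : ℝ :=
  (Finset.range P.N).sup' (Finset.nonempty_range_iff.mpr P.pos.ne')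
    (fun i => P.pt (i + 1) - P.pt i)

/-- A control function on the simplex `Δ = {0 ≤ s ≤ t ≤ 1}`. -/
def IsControl (ω : ℝ → ℝ → ℝ) : Prop :=
  ContinuousOn (fun p : ℝ × ℝ => ω p.1 p.2) {p : ℝ × ℝ | 0 ≤ p.1 ∧ p.1 ≤ p.2 ∧ p.2 ≤ 1} ∧
  (∀ t, 0 ≤ t → t ≤ 1 → ω t t = 0) ∧
  (∀ s t, 0 ≤ s → s ≤ t → t ≤ 1 → 0 ≤ ω s t) ∧
  (∀ s u t, 0 ≤ s → s ≤ u → u ≤ t → t ≤ 1 → ω s u + ω u t ≤ ω s t)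

/-- `ζ(θ) = ∑_{n=1}^∞ n^{-θ}`. -/
noncomputable def zetaR (θ : ℝ) : ℝ := ∑' n : ℕ, ((n : ℝ) + 1) ^ (-θ)

/-- `L = ∫_s^t dΩ · G`: the left-point Riemann–Stieltjes sums
`∑ (Ω(t_i) − Ω(t_{i−1})) ∘ G(t_{i−1})` over partitions of `[s,t]` converge to `L` as the mesh
tends to `0`. -/
def RSLimit {V : Type u} [NormedAddCommGroup V] [NormedSpace ℝ V]
    (Ω G : ℝ → V →L[ℝ] V) (s t : ℝ) (L : V →L[ℝ] V) : Prop :=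
  ∀ ε > (0 : ℝ), ∃ δ > (0 : ℝ), ∀ P : Subdivision s t, P.mesh < δ →
    ‖(∑ i ∈ Finset.range P.N, (Ω (P.pt (i + 1)) - Ω (P.pt i)).comp (G (P.pt i))) - L‖ ≤ ε

namespace S4

open Finset

/-- generic chain monotonicity -/
theorem mono_chain {α : Type*} [Preorder α] {x : ℕ → α} {M : ℕ} (hx : ∀ i, i < M → x i ≤ x (i+1)) :
    ∀ {i j : ℕ}, i ≤ j → j ≤ M → x i ≤ x j := by
  intro i j
  induction j with
  | zero => intro h _; simp [Nat.le_zero.mp h]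
  | succ k ih =>
    intro hij hk
    rcases eq_or_lt_of_le hij with rfl | h
    · exact le_rfl
    · exact le_trans (ih (Nat.lt_succ_iff.mp h) (by omega)) (hx k (by omega))

theorem _root_.Subdivision.pt_le {s t : ℝ} (P : Subdivision s t) {i j : ℕ} (hij : i ≤ j)
    (hj : j ≤ P.N) : P.pt i ≤ P.pt j :=
  mono_chain P.mono hij hj

theorem _root_.Subdivision.pt_ge_s {s t : ℝ} (P : Subdivision s t) {i : ℕ} (hi : i ≤ P.N) :
    s ≤ P.pt i := by
  have := P.pt_le (Nat.zero_le i) hi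
  rwa [P.first] at this

theorem _root_.Subdivision.pt_le_t {s t : ℝ} (P : Subdivision s t) {i : ℕ} (hi : i ≤ P.N) :
    P.pt i ≤ t := by
  have := P.pt_le hi le_rfl
  rwa [P.last] at this

/-- monotonicity of a control in both variables -/
theorem control_mono {ω : ℝ → ℝ → ℝ} (hω : IsControl ω) {s s' t' t : ℝ}
    (h0 : 0 ≤ s) (h1 : s ≤ s') (h2 : s' ≤ t') (h3 : t' ≤ t) (h4 : t ≤ 1) :
    ω s' t' ≤ ω s t := by
  obtain ⟨-, -, hnn, hsup⟩ := hω
  have a1 : ω s s' + ω s' t' ≤ ω s t' := hsup s s' t' h0 h1 h2 (by linarith)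
  have a2 : ω s t' + ω t' t ≤ ω s t := hsup s t' t h0 (by linarith) h3 h4
  have b1 : 0 ≤ ω s s' := hnn s s' h0 h1 (by linarith)
  have b2 : 0 ≤ ω t' t := hnn t' t (by linarith) h3 h4
  linarith

/-- chain superadditivity -/
theorem control_chain {ω : ℝ → ℝ → ℝ} (hω : IsControl ω) :
    ∀ (M : ℕ) (x : ℕ → ℝ), (∀ i, i < M → x i ≤ x (i+1)) → 0 ≤ x 0 → x M ≤ 1 →
      ∑ i ∈ Finset.range M, ω (x i) (x (i+1)) ≤ ω (x 0) (x M) := by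
  obtain ⟨-, -, hnn, hsup⟩ := hω
  intro M
  induction M with
  | zero => intro x _ h0 h1; simpa using hnn (x 0) (x 0) h0 le_rfl h1
  | succ K ih =>
    intro x hx h0 h1
    have hmono : ∀ {i j : ℕ}, i ≤ j → j ≤ K + 1 → x i ≤ x j := fun hij hj =>
      mono_chain hx hij hj
    have hK1 : x K ≤ 1 := le_trans (hmono (Nat.le_succ K) le_rfl) h1
    have := ih x (fun i hi => hx i (by omega)) h0 hK1
    rw [Finset.sum_range_succ]
    have hstep : ω (x 0) (x K) + ω (x K) (x (K+1)) ≤ ω (x 0) (x (K+1)) :=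
      hsup _ _ _ h0 (hmono (Nat.zero_le K) (by omega)) (hx K (by omega)) h1
    linarith

end S4
namespace S4

open Finset

variable {V : Type u} [NormedAddCommGroup V] [NormedSpace ℝ V]

/-- abbreviation for the Riemann–Stieltjes sum -/
noncomputable def RS (Ω G : ℝ → V →L[ℝ] V) {s t : ℝ} (P : Subdivision s t) : V →L[ℝ] V :=
  ∑ i ∈ Finset.range P.N, (Ω (P.pt (i + 1)) - Ω (P.pt i)).comp (G (P.pt i))

theorem maximal_aux {q : ℝ} (hq1 : 1 ≤ q) (hq2 : q < 2)
    {ω : ℝ → ℝ → ℝ} (hω : IsControl ω) {Ω : ℝ → V →L[ℝ] V}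
    (hΩ : ∀ a b, 0 ≤ a → a ≤ b → b ≤ 1 → ‖Ω b - Ω a‖ ≤ ω a b ^ (1 / q))
    {s t : ℝ} (hs : 0 ≤ s) (ht : t ≤ 1)
    {G : ℝ → V →L[ℝ] V} {C : ℝ} (hC : 0 ≤ C)
    (hG : ∀ a b, s ≤ a → a ≤ b → b ≤ t → ‖G b - G a‖ ≤ C * ω a b ^ (1 / q)) :
    ∀ (N : ℕ) (P : Subdivision s t), P.N = N →
      ‖RS Ω G P - (Ω t - Ω s).comp (G s)‖ ≤
        C * ∑ k ∈ Finset.Icc 1 (N - 1), (2 * ω s t / k) ^ ((2:ℝ) / q) := by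
  have hq0 : 0 < q := by linarith
  have hp0 : (0:ℝ) < 1 / q := by positivity
  intro N
  induction N with
  | zero => intro P hP; exact absurd (hP ▸ P.pos) (lt_irrefl 0)
  | succ N ih =>
    intro P hP
    rcases Nat.eq_zero_or_pos N with rfl | hN
    · -- base case: one interval
      norm_num at hP
      have h1 : P.pt 1 = t := by have := P.last; rwa [hP] at this
      have hRS : RS Ω G P = (Ω t - Ω s).comp (G s) := by
        rw [RS, hP, Finset.sum_range_one, P.first, h1]
      rw [hRS, sub_self, norm_zero, show (0+1-1 : ℕ) = 0 by rfl,
        Finset.Icc_eq_empty (by omega), Finset.sum_empty, mul_zero]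
    · -- inductive step: remove a point
      have hst : s ≤ t := le_trans (P.pt_ge_s (Nat.zero_le _)) (P.pt_le_t (Nat.zero_le _))
      have hωst : 0 ≤ ω s t := hω.2.2.1 s t hs hst ht
      -- choose the point to remove
      obtain ⟨i, hiI, hmin⟩ := Finset.exists_min_image (Finset.Icc 1 N)
        (fun j => ω (P.pt (j - 1)) (P.pt j) + ω (P.pt j) (P.pt (j + 1)))
        ⟨1, Finset.mem_Icc.mpr ⟨le_rfl, hN⟩⟩
      obtain ⟨hi1, hiN⟩ := Finset.mem_Icc.mp hiI
      obtain ⟨m, rfl⟩ : ∃ m, i = m + 1 := ⟨i - 1, by omega⟩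
      have hm2 : m + 2 ≤ N + 1 := by omega
      -- bounds on the points
      have hpt0 : ∀ j, j ≤ N + 1 → 0 ≤ P.pt j := fun j hj =>
        le_trans hs (P.pt_ge_s (by omega))
      have hpt1 : ∀ j, j ≤ N + 1 → P.pt j ≤ 1 := fun j hj =>
        le_trans (P.pt_le_t (by omega)) ht
      have hnn : ∀ j, j < N + 1 → 0 ≤ ω (P.pt j) (P.pt (j + 1)) := fun j hj =>
        hω.2.2.1 _ _ (hpt0 j (by omega)) (P.pt_le (by omega) (by omega)) (hpt1 _ (by omega))
      -- the sum of consecutive controls is at most ω s t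
      have hchain : ∑ j ∈ Finset.range (N + 1), ω (P.pt j) (P.pt (j + 1)) ≤ ω s t := by
        have := control_chain hω (N + 1) P.pt (fun j hj => P.mono j (by omega))
          (by simpa [P.first] using hs) (by rw [show N+1 = P.N from hP.symm, P.last]; exact ht)
        rwa [P.first, show P.pt (N+1) = t by rw [show N+1 = P.N from hP.symm]; exact P.last]
          at this
      have hsum1 : ∑ j ∈ Finset.Icc 1 N, ω (P.pt (j - 1)) (P.pt j) ≤ ω s t := by
        have he : ∑ j ∈ Finset.Icc 1 N, ω (P.pt (j - 1)) (P.pt j)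
            = ∑ j ∈ Finset.range N, ω (P.pt j) (P.pt (j + 1)) := by
          rw [← Finset.Ico_add_one_right_eq_Icc, Finset.sum_Ico_eq_sum_range, Nat.add_sub_cancel]
          exact Finset.sum_congr rfl fun j _ => by
            rw [show 1 + j - 1 = j by omega, show 1 + j = j + 1 by omega]
        rw [he]
        refine le_trans (Finset.sum_le_sum_of_subset_of_nonneg
          (Finset.range_subset_range.mpr (by omega)) fun j hj _ => hnn j (Finset.mem_range.mp hj))
          hchain
      have hsum2 : ∑ j ∈ Finset.Icc 1 N, ω (P.pt j) (P.pt (j + 1)) ≤ ω s t := by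
        rw [← Finset.Ico_add_one_right_eq_Icc]
        refine le_trans (Finset.sum_le_sum_of_subset_of_nonneg
          (fun j hj => ?_) fun j hj _ => hnn j (Finset.mem_range.mp hj)) hchain
        · rw [Finset.mem_range]; exact (Finset.mem_Ico.mp hj).2
      set a := ω (P.pt m) (P.pt (m + 1)) with ha
      set b := ω (P.pt (m + 1)) (P.pt (m + 2)) with hb
      have hminle : (N : ℝ) * (a + b) ≤ 2 * ω s t := by
        have hcard : (Finset.Icc 1 N).card = N := by rw [Nat.card_Icc]; omega
        have h1 := Finset.card_nsmul_le_sum (Finset.Icc 1 N)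
          (fun j => ω (P.pt (j - 1)) (P.pt j) + ω (P.pt j) (P.pt (j + 1)))
          ((fun j => ω (P.pt (j - 1)) (P.pt j) + ω (P.pt j) (P.pt (j + 1))) (m + 1))
          (fun j hj => hmin j hj)
        rw [hcard] at h1
        simp only [show m + 1 - 1 = m by omega, nsmul_eq_mul] at h1
        rw [Finset.sum_add_distrib] at h1
        calc (N:ℝ) * (a + b) ≤ _ := h1
        _ ≤ 2 * ω s t := by linarith
      have ha0 : 0 ≤ a := hnn m (by omega)
      have hb0 : 0 ≤ b := hnn (m + 1) (by omega)
      -- the reduced subdivision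
      let P' : Subdivision s t :=
        { N := N
          pt := fun j => if j < m + 1 then P.pt j else P.pt (j + 1)
          pos := hN
          first := by simp [P.first]
          last := by
            show (if N < m + 1 then P.pt N else P.pt (N + 1)) = t
            rw [if_neg (by omega), show N + 1 = P.N from hP.symm]; exact P.last
          mono := by
            intro j hj
            show (if j < m + 1 then P.pt j else P.pt (j + 1))
              ≤ (if j + 1 < m + 1 then P.pt (j + 1) else P.pt (j + 1 + 1))
            split_ifs <;> exact P.pt_le (by omega) (by omega) }
      have hIH := ih P' rfl
      have hP'pt : ∀ j, m + 1 ≤ j → P'.pt j = P.pt (j + 1) := fun j hj => if_neg (by omega)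
      have hP'pt2 : ∀ j, j ≤ m → P'.pt j = P.pt j := fun j hj => if_pos (by omega)
      -- sum decomposition
      have hsplit : RS Ω G P - RS Ω G P'
          = (Ω (P.pt (m + 2)) - Ω (P.pt (m + 1))).comp (G (P.pt (m + 1)) - G (P.pt m)) := by
        have e1 : RS Ω G P = (∑ j ∈ Finset.range m,
              (Ω (P.pt (j + 1)) - Ω (P.pt j)).comp (G (P.pt j)))
            + (Ω (P.pt (m + 1)) - Ω (P.pt m)).comp (G (P.pt m))
            + (Ω (P.pt (m + 2)) - Ω (P.pt (m + 1))).comp (G (P.pt (m + 1)))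
            + ∑ j ∈ Finset.Ico (m + 2) (N + 1),
                (Ω (P.pt (j + 1)) - Ω (P.pt j)).comp (G (P.pt j)) := by
          rw [RS, hP, Finset.range_eq_Ico,
            ← Finset.sum_Ico_consecutive _ (by omega : 0 ≤ m + 2) (by omega : m + 2 ≤ N + 1),
            ← Finset.range_eq_Ico, Finset.sum_range_succ, Finset.sum_range_succ]
        have e2 : RS Ω G P' = (∑ j ∈ Finset.range m,
              (Ω (P.pt (j + 1)) - Ω (P.pt j)).comp (G (P.pt j)))
            + (Ω (P.pt (m + 2)) - Ω (P.pt m)).comp (G (P.pt m))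
            + ∑ j ∈ Finset.Ico (m + 2) (N + 1),
                (Ω (P.pt (j + 1)) - Ω (P.pt j)).comp (G (P.pt j)) := by
          rw [RS, show P'.N = N from rfl, Finset.range_eq_Ico,
            ← Finset.sum_Ico_consecutive _ (by omega : 0 ≤ m + 1) (by omega : m + 1 ≤ N),
            ← Finset.range_eq_Ico, Finset.sum_range_succ]
          congr 1
          · congr 1
            · exact Finset.sum_congr rfl fun j hj => by
                have hjm := Finset.mem_range.mp hj
                rw [hP'pt2 j (by omega), hP'pt2 (j + 1) (by omega)]
            · rw [hP'pt2 m le_rfl, hP'pt (m + 1) le_rfl]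
          · rw [Finset.sum_Ico_eq_sum_range, Finset.sum_Ico_eq_sum_range,
              show N - (m + 1) = N + 1 - (m + 2) by omega]
            refine Finset.sum_congr rfl fun j hj => ?_
            rw [hP'pt (m + 1 + j) (by omega), hP'pt (m + 1 + j + 1) (by omega),
              show m + 1 + j + 1 = m + 2 + j by omega]
        rw [e1, e2]
        ext v
        simp only [ContinuousLinearMap.coe_sub', Pi.sub_apply, ContinuousLinearMap.add_apply,
          ContinuousLinearMap.coe_comp', Function.comp_apply, ContinuousLinearMap.sub_apply,
          map_sub]
        abel
      -- estimate of the removal error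
      have herr : ‖RS Ω G P - RS Ω G P'‖ ≤ C * (2 * ω s t / N) ^ ((2:ℝ) / q) := by
        rw [hsplit]
        have h1 : ‖Ω (P.pt (m + 2)) - Ω (P.pt (m + 1))‖ ≤ b ^ (1 / q) :=
          hΩ _ _ (hpt0 _ (by omega)) (P.pt_le (by omega) (by omega)) (hpt1 _ hm2)
        have h2 : ‖G (P.pt (m + 1)) - G (P.pt m)‖ ≤ C * a ^ (1 / q) :=
          hG _ _ (P.pt_ge_s (by omega)) (P.pt_le (by omega) (by omega))
            (P.pt_le_t (by omega))
        refine le_trans (ContinuousLinearMap.opNorm_comp_le _ _) ?_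
        refine le_trans (mul_le_mul h1 h2 (norm_nonneg _) (by positivity)) ?_
        rw [show b ^ (1/q) * (C * a ^ (1/q)) = C * (a ^ (1/q) * b ^ (1/q)) by ring,
          ← Real.mul_rpow ha0 hb0]
        refine mul_le_mul_of_nonneg_left ?_ hC
        have hNpos : (0:ℝ) < N := by exact_mod_cast hN
        set w : ℝ := ω s t / N with hw
        have hw0 : 0 ≤ w := by positivity
        have habw : a + b ≤ 2 * w := by
          rw [hw, ← mul_div_assoc, le_div_iff₀ hNpos]
          nlinarith [hminle]
        have hab : a * b ≤ w ^ (2:ℕ) := by nlinarith [sq_nonneg (a - b)]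
        calc (a * b) ^ (1/q) ≤ (w ^ (2:ℕ)) ^ (1/q) :=
              Real.rpow_le_rpow (by positivity) hab (by positivity)
        _ = w ^ ((2:ℝ) / q) := by
              rw [← Real.rpow_natCast w 2, ← Real.rpow_mul hw0]
              congr 1
              push_cast
              ring
        _ ≤ (2 * ω s t / N) ^ ((2:ℝ) / q) := by
              refine Real.rpow_le_rpow hw0 ?_ (by positivity)
              rw [hw]
              gcongr
              linarith
      -- conclusion
      have htri : ‖RS Ω G P - (Ω t - Ω s).comp (G s)‖
          ≤ ‖RS Ω G P' - (Ω t - Ω s).comp (G s)‖ + ‖RS Ω G P - RS Ω G P'‖ := by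
        have hdec : RS Ω G P - (Ω t - Ω s).comp (G s)
            = (RS Ω G P' - (Ω t - Ω s).comp (G s)) + (RS Ω G P - RS Ω G P') := by abel
        rw [hdec]
        exact norm_add_le _ _
      refine le_trans htri ?_
      have hfin : ∑ k ∈ Finset.Icc 1 (N + 1 - 1), (2 * ω s t / (k:ℝ)) ^ ((2:ℝ)/q)
          = ∑ k ∈ Finset.Icc 1 (N - 1), (2 * ω s t / (k:ℝ)) ^ ((2:ℝ)/q)
            + (2 * ω s t / (N:ℝ)) ^ ((2:ℝ)/q) := by
        rw [show (N+1) - 1 = (N - 1) + 1 by omega, Finset.sum_Icc_succ_top (by omega)]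
        rw [show (N - 1 + 1 : ℕ) = N by omega]
      rw [hfin, mul_add]
      exact add_le_add hIH herr

end S4
namespace S4

open Finset

theorem zetaR_summable {θ : ℝ} (hθ : 1 < θ) :
    Summable (fun n : ℕ => ((n : ℝ) + 1) ^ (-θ)) := by
  have h : Summable (fun n : ℕ => (n : ℝ) ^ (-θ)) :=
    (Real.summable_nat_rpow (p := -θ)).mpr (by linarith)
  have h2 := (summable_nat_add_iff 1).mpr h
  simpa using h2

theorem zetaR_nonneg {θ : ℝ} : 0 ≤ zetaR θ :=
  tsum_nonneg fun n => Real.rpow_nonneg (by positivity) _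

theorem sum_rpow_le_zetaR {θ : ℝ} (hθ : 1 < θ) (M : ℕ) :
    ∑ k ∈ Finset.Icc 1 M, (k : ℝ) ^ (-θ) ≤ zetaR θ := by
  have he : ∑ k ∈ Finset.Icc 1 M, (k : ℝ) ^ (-θ)
      = ∑ j ∈ Finset.range M, ((j : ℝ) + 1) ^ (-θ) := by
    rw [← Finset.Ico_add_one_right_eq_Icc, Finset.sum_Ico_eq_sum_range, Nat.add_sub_cancel]
    refine Finset.sum_congr rfl fun j _ => ?_
    congr 1
    push_cast
    ring
  rw [he]
  exact Summable.sum_le_tsum _ (fun j _ => Real.rpow_nonneg (by positivity) _)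
    (zetaR_summable hθ)

variable {V : Type u} [NormedAddCommGroup V] [NormedSpace ℝ V]

/-- The Young–Lóeve maximal inequality with the zeta constant. -/
theorem maximal {q : ℝ} (hq1 : 1 ≤ q) (hq2 : q < 2)
    {ω : ℝ → ℝ → ℝ} (hω : IsControl ω) {Ω : ℝ → V →L[ℝ] V}
    (hΩ : ∀ a b, 0 ≤ a → a ≤ b → b ≤ 1 → ‖Ω b - Ω a‖ ≤ ω a b ^ (1 / q))
    {s t : ℝ} (hs : 0 ≤ s) (ht : t ≤ 1)
    {G : ℝ → V →L[ℝ] V} {C : ℝ} (hC : 0 ≤ C)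
    (hG : ∀ a b, s ≤ a → a ≤ b → b ≤ t → ‖G b - G a‖ ≤ C * ω a b ^ (1 / q))
    (P : Subdivision s t) :
    ‖RS Ω G P - (Ω t - Ω s).comp (G s)‖ ≤
      C * (2 ^ ((2:ℝ) / q) * zetaR (2 / q)) * ω s t ^ ((2:ℝ) / q) := by
  have hq0 : 0 < q := by linarith
  have hθ : 1 < (2:ℝ) / q := by
    rw [lt_div_iff₀ hq0]; linarith
  have hst : s ≤ t := le_trans (P.pt_ge_s (Nat.zero_le _)) (P.pt_le_t (Nat.zero_le _))
  have hωst : 0 ≤ ω s t := hω.2.2.1 s t hs hst ht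
  refine le_trans (maximal_aux hq1 hq2 hω hΩ hs ht hC hG P.N P rfl) ?_
  have key : ∑ k ∈ Finset.Icc 1 (P.N - 1), (2 * ω s t / (k:ℝ)) ^ ((2:ℝ) / q)
      ≤ (2 ^ ((2:ℝ) / q) * zetaR (2 / q)) * ω s t ^ ((2:ℝ) / q) := by
    have he : ∀ k ∈ Finset.Icc 1 (P.N - 1), (2 * ω s t / (k:ℝ)) ^ ((2:ℝ) / q)
        = 2 ^ ((2:ℝ)/q) * ω s t ^ ((2:ℝ)/q) * (k:ℝ) ^ (-((2:ℝ)/q)) := by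
      intro k hk
      have hk1 : 1 ≤ k := (Finset.mem_Icc.mp hk).1
      have hkpos : (0:ℝ) < k := by exact_mod_cast hk1
      rw [Real.div_rpow (by positivity) hkpos.le,
        Real.mul_rpow (by norm_num) hωst, div_eq_mul_inv, ← Real.rpow_neg hkpos.le]
    rw [Finset.sum_congr rfl he, ← Finset.mul_sum]
    calc 2 ^ ((2:ℝ)/q) * ω s t ^ ((2:ℝ)/q) * ∑ k ∈ Finset.Icc 1 (P.N - 1), (k:ℝ) ^ (-((2:ℝ)/q))
        ≤ 2 ^ ((2:ℝ)/q) * ω s t ^ ((2:ℝ)/q) * zetaR (2/q) :=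
          mul_le_mul_of_nonneg_left (sum_rpow_le_zetaR hθ _) (by positivity)
    _ = (2 ^ ((2:ℝ) / q) * zetaR (2 / q)) * ω s t ^ ((2:ℝ) / q) := by ring
  calc C * ∑ k ∈ Finset.Icc 1 (P.N - 1), (2 * ω s t / (k:ℝ)) ^ ((2:ℝ) / q)
      ≤ C * ((2 ^ ((2:ℝ) / q) * zetaR (2 / q)) * ω s t ^ ((2:ℝ) / q)) :=
        mul_le_mul_of_nonneg_left key hC
  _ = C * (2 ^ ((2:ℝ) / q) * zetaR (2 / q)) * ω s t ^ ((2:ℝ) / q) := by ring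

end S4
namespace S4

open Finset

theorem mesh_lt_iff {s t : ℝ} (P : Subdivision s t) {δ : ℝ} :
    P.mesh < δ ↔ ∀ i, i < P.N → P.pt (i + 1) - P.pt i < δ := by
  rw [Subdivision.mesh, Finset.sup'_lt_iff]
  constructor
  · intro h i hi; exact h i (Finset.mem_range.mpr hi)
  · intro h i hi; exact h i (Finset.mem_range.mp hi)

theorem gap_le_mesh {s t : ℝ} (P : Subdivision s t) {i : ℕ} (hi : i < P.N) :
    P.pt (i + 1) - P.pt i ≤ P.mesh :=
  Finset.le_sup' (fun i => P.pt (i + 1) - P.pt i) (Finset.mem_range.mpr hi)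

/-- the uniform subdivision of `[s,t]` with `k+1` intervals -/
noncomputable def unif (s t : ℝ) (hst : s ≤ t) (k : ℕ) : Subdivision s t where
  N := k + 1
  pt := fun i => s + i * ((t - s) / (k + 1))
  pos := Nat.succ_pos k
  first := by simp
  last := by
    push_cast
    have hk : ((k:ℝ) + 1) ≠ 0 := by positivity
    field_simp
    ring
  mono := by
    intro i _
    have h1 : (0:ℝ) ≤ (t - s) / (k + 1) := div_nonneg (by linarith) (by positivity)
    have h2 : (i:ℝ) ≤ (i:ℝ) + 1 := by linarith
    push_cast
    nlinarith

theorem unif_gap (s t : ℝ) (hst : s ≤ t) (k : ℕ) (i : ℕ) :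
    (unif s t hst k).pt (i + 1) - (unif s t hst k).pt i = (t - s) / (k + 1) := by
  show (s + (↑(i+1)) * ((t - s) / (k + 1))) - (s + i * ((t - s) / (k + 1)))
    = (t - s) / (k + 1)
  push_cast
  ring

theorem unif_mesh_lt (s t : ℝ) (hst : s ≤ t) (k : ℕ) {δ : ℝ}
    (h : (t - s) / (k + 1) < δ) : (unif s t hst k).mesh < δ := by
  rw [mesh_lt_iff]
  intro i _
  rw [unif_gap]
  exact h

theorem exists_unif_mesh_lt (s t : ℝ) (hst : s ≤ t) {δ : ℝ} (hδ : 0 < δ) :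
    ∀ k₀ : ℕ, ∃ k, k₀ ≤ k ∧ (unif s t hst k).mesh < δ := by
  intro k₀
  obtain ⟨n, hn⟩ := exists_nat_gt ((t - s) / δ)
  refine ⟨max k₀ n, le_max_left _ _, unif_mesh_lt s t hst _ ?_⟩
  rw [div_lt_iff₀ (by positivity)]
  have h1 : (t - s) < δ * (n + 1) := by
    rw [div_lt_iff₀ hδ] at hn
    nlinarith
  have h2 : (n:ℝ) + 1 ≤ (max k₀ n : ℕ) + 1 := by
    have : (n:ℝ) ≤ (max k₀ n : ℕ) := by exact_mod_cast le_max_right k₀ n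
    linarith
  nlinarith [hδ]

/-- uniform smallness of a control from its continuity -/
theorem control_small {ω : ℝ → ℝ → ℝ} (hω : IsControl ω) {η : ℝ} (hη : 0 < η) :
    ∃ δ > (0:ℝ), ∀ a b, 0 ≤ a → a ≤ b → b ≤ 1 → b - a < δ → ω a b < η := by
  set K : Set (ℝ × ℝ) := {p : ℝ × ℝ | 0 ≤ p.1 ∧ p.1 ≤ p.2 ∧ p.2 ≤ 1} with hK
  have hKsub : K ⊆ Set.Icc 0 1 ×ˢ Set.Icc 0 1 := by
    rintro ⟨x, y⟩ ⟨h1, h2, h3⟩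
    exact ⟨⟨h1, by linarith⟩, ⟨by linarith, h3⟩⟩
  have hKclosed : IsClosed K := by
    have : K = {p : ℝ × ℝ | 0 ≤ p.1} ∩ ({p : ℝ × ℝ | p.1 ≤ p.2} ∩ {p : ℝ × ℝ | p.2 ≤ 1}) := by
      ext p; simp [hK, Set.mem_inter_iff, and_assoc]
    rw [this]
    exact (isClosed_le continuous_const continuous_fst).inter
      ((isClosed_le continuous_fst continuous_snd).inter
        (isClosed_le continuous_snd continuous_const))
  have hKcomp : IsCompact K :=
    ((isCompact_Icc.prod isCompact_Icc).of_isClosed_subset hKclosed hKsub)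
  have hcont : ContinuousOn (fun p : ℝ × ℝ => ω p.1 p.2) K := hω.1
  have hUC := hKcomp.uniformContinuousOn_of_continuous hcont
  rw [Metric.uniformContinuousOn_iff] at hUC
  obtain ⟨δ, hδ, hδ'⟩ := hUC η hη
  refine ⟨δ, hδ, fun a b h0 hab hb1 hlt => ?_⟩
  have hmem1 : (a, b) ∈ K := ⟨h0, hab, hb1⟩
  have hmem2 : (a, a) ∈ K := ⟨h0, le_rfl, by linarith⟩
  have hd : dist ((a, b) : ℝ × ℝ) ((a, a) : ℝ × ℝ) < δ := by
    rw [Prod.dist_eq]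
    simp only [dist_self, Real.dist_eq]
    rw [max_lt_iff]
    constructor
    · exact hδ
    · rw [abs_of_nonneg (by linarith)]; exact hlt
  have := hδ' (a, b) hmem1 (a, a) hmem2 hd
  simp only [Real.dist_eq] at this
  rw [hω.2.1 a h0 (by linarith)] at this
  calc ω a b ≤ |ω a b - 0| := by rw [sub_zero]; exact le_abs_self _
  _ < η := this

theorem sum_blocks {M : Type*} [AddCommMonoid M] (f : ℕ → M) (a : ℕ → ℕ) (ha0 : a 0 = 0) :
    ∀ K : ℕ, (∀ j, j < K → a j ≤ a (j + 1)) →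
      ∑ i ∈ Finset.range (a K), f i
        = ∑ j ∈ Finset.range K, ∑ i ∈ Finset.Ico (a j) (a (j + 1)), f i := by
  intro K
  induction K with
  | zero => intro _; simp [ha0]
  | succ K ih =>
    intro h
    rw [Finset.sum_range_succ, ← ih (fun j hj => h j (by omega)), Finset.range_eq_Ico,
      Finset.range_eq_Ico, Finset.sum_Ico_consecutive f (Nat.zero_le (a K)) (h K (by omega))]

end S4
namespace S4

open Finset

variable {V : Type u} [NormedAddCommGroup V] [NormedSpace ℝ V]

/-- comparison of the RS sum over a subdivision with the sum over a refinement -/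
theorem refine_close {q : ℝ} (hq1 : 1 ≤ q) (hq2 : q < 2)
    {ω : ℝ → ℝ → ℝ} (hω : IsControl ω) {Ω : ℝ → V →L[ℝ] V}
    (hΩ : ∀ a b, 0 ≤ a → a ≤ b → b ≤ 1 → ‖Ω b - Ω a‖ ≤ ω a b ^ (1 / q))
    {s t : ℝ} (hs : 0 ≤ s) (ht : t ≤ 1)
    {G : ℝ → V →L[ℝ] V} {C : ℝ} (hC : 0 ≤ C)
    (hG : ∀ a b, s ≤ a → a ≤ b → b ≤ t → ‖G b - G a‖ ≤ C * ω a b ^ (1 / q))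
    (P R : Subdivision s t) (a : ℕ → ℕ) (ha0 : a 0 = 0) (haN : a P.N = R.N)
    (hamono : ∀ j, j < P.N → a j ≤ a (j + 1))
    (haP : ∀ j, j ≤ P.N → R.pt (a j) = P.pt j) :
    ‖RS Ω G R - RS Ω G P‖ ≤ C * (2 ^ ((2:ℝ)/q) * zetaR (2/q)) *
      ∑ j ∈ Finset.range P.N, ω (P.pt j) (P.pt (j + 1)) ^ ((2:ℝ)/q) := by
  have haub : ∀ j, j ≤ P.N → a j ≤ R.N := fun j hj => haN ▸ mono_chain hamono hj le_rfl
  have hsplit : RS Ω G R = ∑ j ∈ Finset.range P.N, ∑ i ∈ Finset.Ico (a j) (a (j + 1)),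
      (Ω (R.pt (i + 1)) - Ω (R.pt i)).comp (G (R.pt i)) := by
    rw [RS, ← haN]
    exact sum_blocks _ a ha0 P.N hamono
  rw [hsplit, RS, ← Finset.sum_sub_distrib, Finset.mul_sum]
  refine le_trans (norm_sum_le _ _) (Finset.sum_le_sum fun j hj => ?_)
  have hjN := Finset.mem_range.mp hj
  have hptj0 : 0 ≤ P.pt j := le_trans hs (P.pt_ge_s (by omega))
  have hptj : P.pt j ≤ P.pt (j + 1) := P.pt_le (by omega) (by omega)
  have hptj1 : P.pt (j + 1) ≤ 1 := le_trans (P.pt_le_t (by omega)) ht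
  have hωj : 0 ≤ ω (P.pt j) (P.pt (j + 1)) := hω.2.2.1 _ _ hptj0 hptj hptj1
  have hrhs : 0 ≤ C * (2 ^ ((2:ℝ)/q) * zetaR (2/q)) * ω (P.pt j) (P.pt (j + 1)) ^ ((2:ℝ)/q) := by
    have := zetaR_nonneg (θ := 2/q)
    positivity
  rcases Nat.eq_or_lt_of_le (hamono j hjN) with heq | hlt
  · -- empty block
    have hpt : P.pt j = P.pt (j + 1) := by
      rw [← haP j (by omega), ← haP (j + 1) (by omega), heq]
    have hIco : Finset.Ico (a j) (a (j + 1)) = ∅ := by rw [← heq, Finset.Ico_self]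
    have hz : (Ω (P.pt (j + 1)) - Ω (P.pt j)).comp (G (P.pt j)) = 0 := by
      rw [← hpt, sub_self, ContinuousLinearMap.zero_comp]
    rw [hIco, Finset.sum_empty, hz, sub_zero, norm_zero]
    exact hrhs
  · -- genuine block: it is a subdivision of the interval
    let Q : Subdivision (P.pt j) (P.pt (j + 1)) :=
      { N := a (j + 1) - a j
        pt := fun k => R.pt (a j + k)
        pos := by omega
        first := by
          show R.pt (a j + 0) = P.pt j
          rw [Nat.add_zero]; exact haP j (by omega)
        last := by
          show R.pt (a j + (a (j + 1) - a j)) = P.pt (j + 1)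
          rw [show a j + (a (j + 1) - a j) = a (j + 1) by omega]
          exact haP (j + 1) (by omega)
        mono := fun k hk => R.pt_le (by omega) (by
          have := haub (j + 1) (by omega); omega) }
    have hQsum : ∑ i ∈ Finset.Ico (a j) (a (j + 1)),
        (Ω (R.pt (i + 1)) - Ω (R.pt i)).comp (G (R.pt i)) = RS Ω G Q := by
      rw [RS, show Q.N = a (j + 1) - a j from rfl, Finset.sum_Ico_eq_sum_range]
      refine Finset.sum_congr rfl fun k hk => ?_
      rw [show Q.pt k = R.pt (a j + k) from rfl, show Q.pt (k + 1) = R.pt (a j + (k + 1)) from rfl,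
        show a j + (k + 1) = a j + k + 1 by omega]
    rw [hQsum]
    have hmax := maximal hq1 hq2 hω hΩ hptj0 hptj1 hC
      (fun x y hx hxy hy => hG x y (le_trans (P.pt_ge_s (by omega)) hx) hxy
        (le_trans hy (P.pt_le_t (by omega)))) Q
    calc ‖RS Ω G Q - (Ω (P.pt (j + 1)) - Ω (P.pt j)).comp (G (P.pt j))‖
        ≤ C * (2 ^ ((2:ℝ)/q) * zetaR (2/q)) * ω (P.pt j) (P.pt (j + 1)) ^ ((2:ℝ)/q) := hmax
    _ = _ := rfl

end S4
namespace S4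

open Finset

theorem common_refinement {s t : ℝ} (hst : s < t) (P Q : Subdivision s t) :
    ∃ R : Subdivision s t, ∃ aP aQ : ℕ → ℕ,
      aP 0 = 0 ∧ aQ 0 = 0 ∧ aP P.N = R.N ∧ aQ Q.N = R.N ∧
      (∀ j, j < P.N → aP j ≤ aP (j + 1)) ∧ (∀ j, j < Q.N → aQ j ≤ aQ (j + 1)) ∧
      (∀ j, j ≤ P.N → R.pt (aP j) = P.pt j) ∧ (∀ j, j ≤ Q.N → R.pt (aQ j) = Q.pt j) := by
  classical
  set pts : Finset ℝ :=
    (Finset.range (P.N + 1)).image P.pt ∪ (Finset.range (Q.N + 1)).image Q.pt with hpts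
  have hPmem : ∀ j, j ≤ P.N → P.pt j ∈ pts := fun j hj =>
    Finset.mem_union_left _ (Finset.mem_image.mpr ⟨j, Finset.mem_range.mpr (by omega), rfl⟩)
  have hQmem : ∀ j, j ≤ Q.N → Q.pt j ∈ pts := fun j hj =>
    Finset.mem_union_right _ (Finset.mem_image.mpr ⟨j, Finset.mem_range.mpr (by omega), rfl⟩)
  have hsmem : s ∈ pts := P.first ▸ hPmem 0 (Nat.zero_le _)
  have htmem : t ∈ pts := P.last ▸ hPmem P.N le_rfl
  have hmem_le : ∀ x ∈ pts, s ≤ x ∧ x ≤ t := by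
    intro x hx
    rw [hpts, Finset.mem_union] at hx
    rcases hx with hx | hx <;> obtain ⟨j, hj, rfl⟩ := Finset.mem_image.mp hx
    · exact ⟨P.pt_ge_s (by have := Finset.mem_range.mp hj; omega),
        P.pt_le_t (by have := Finset.mem_range.mp hj; omega)⟩
    · exact ⟨Q.pt_ge_s (by have := Finset.mem_range.mp hj; omega),
        Q.pt_le_t (by have := Finset.mem_range.mp hj; omega)⟩
  set M := pts.card with hM
  have hM2 : 2 ≤ M := by
    rw [hM]
    exact Finset.one_lt_card.mpr ⟨s, hsmem, t, htmem, ne_of_lt hst⟩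
  let e := pts.orderIsoOfFin (rfl : pts.card = M)
  -- extremal values
  have hbot : ((e ⟨0, by omega⟩ : pts) : ℝ) = s := by
    refine le_antisymm ?_ (hmem_le _ (e ⟨0, by omega⟩).2).1
    have h1 : e ⟨0, by omega⟩ ≤ e (e.symm ⟨s, hsmem⟩) := e.monotone (Fin.le_def.mpr (Nat.zero_le _))
    have h2 : ((e (e.symm ⟨s, hsmem⟩) : pts) : ℝ) = s := by rw [OrderIso.apply_symm_apply]
    calc ((e ⟨0, by omega⟩ : pts) : ℝ) ≤ _ := h1
    _ = s := h2
  have htop : ((e ⟨M - 1, by omega⟩ : pts) : ℝ) = t := by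
    refine le_antisymm (hmem_le _ (e ⟨M - 1, by omega⟩).2).2 ?_
    have h1 : e (e.symm ⟨t, htmem⟩) ≤ e ⟨M - 1, by omega⟩ :=
      e.monotone (Fin.le_def.mpr (show (e.symm ⟨t, htmem⟩).1 ≤ M - 1 by
        have := (e.symm ⟨t, htmem⟩).2; omega))
    have h2 : ((e (e.symm ⟨t, htmem⟩) : pts) : ℝ) = t := by rw [OrderIso.apply_symm_apply]
    calc t = _ := h2.symm
    _ ≤ _ := h1
  let R : Subdivision s t :=
    { N := M - 1
      pt := fun i => ((e ⟨min i (M - 1), by omega⟩ : pts) : ℝ)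
      pos := by omega
      first := by
        show ((e ⟨min 0 (M - 1), by omega⟩ : pts) : ℝ) = s
        rw [show (⟨min 0 (M - 1), by omega⟩ : Fin M) = ⟨0, by omega⟩ from
          Fin.ext (show min 0 (M - 1) = 0 by omega)]
        exact hbot
      last := by
        show ((e ⟨min (M - 1) (M - 1), by omega⟩ : pts) : ℝ) = t
        rw [show (⟨min (M - 1) (M - 1), by omega⟩ : Fin M) = ⟨M - 1, by omega⟩ from
          Fin.ext (show min (M - 1) (M - 1) = M - 1 by omega)]
        exact htop
      mono := by
        intro i hi
        show ((e ⟨min i (M - 1), by omega⟩ : pts) : ℝ) ≤ ((e ⟨min (i+1) (M - 1), by omega⟩ : pts) : ℝ)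
        exact e.monotone (Fin.le_def.mpr
          (show min i (M - 1) ≤ min (i + 1) (M - 1) by omega)) }
  have hRpt : ∀ (k : Fin M), R.pt k.1 = ((e k : pts) : ℝ) := by
    intro k
    show ((e ⟨min k.1 (M - 1), by omega⟩ : pts) : ℝ) = _
    rw [show (⟨min k.1 (M - 1), by omega⟩ : Fin M) = k from
      Fin.ext (show min k.1 (M - 1) = k.1 by have := k.2; omega)]
  have hsymm_bot : ∀ y : pts, (y : ℝ) = s → (e.symm y).1 = 0 := by
    intro y hy
    have h0 : (0:ℕ) < M := by omega
    have h1 : y ≤ e ⟨0, h0⟩ := by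
      show (y : ℝ) ≤ _
      rw [hy]
      exact (hmem_le _ (e ⟨0, h0⟩).2).1
    have h2 := e.symm.monotone h1
    rw [OrderIso.symm_apply_apply] at h2
    have h3 : (e.symm y).1 ≤ 0 := Fin.le_def.mp h2
    omega
  have hsymm_top : ∀ y : pts, (y : ℝ) = t → (e.symm y).1 = M - 1 := by
    intro y hy
    have h0 : M - 1 < M := by omega
    have h1 : e ⟨M - 1, h0⟩ ≤ y := by
      show _ ≤ (y : ℝ)
      rw [hy]
      exact (hmem_le _ (e ⟨M - 1, h0⟩).2).2
    have h2 := e.symm.monotone h1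
    rw [OrderIso.symm_apply_apply] at h2
    have h3 : M - 1 ≤ (e.symm y).1 := Fin.le_def.mp h2
    have h4 := (e.symm y).2
    omega
  have hRsymm : ∀ y : pts, R.pt (e.symm y).1 = (y : ℝ) := fun y => by
    rw [hRpt (e.symm y), OrderIso.apply_symm_apply]
  refine ⟨R, fun j => (e.symm ⟨P.pt (min j P.N), hPmem _ (by omega)⟩).1,
    fun j => (e.symm ⟨Q.pt (min j Q.N), hQmem _ (by omega)⟩).1, ?_, ?_, ?_, ?_, ?_, ?_, ?_, ?_⟩
  · -- aP 0 = 0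
    exact hsymm_bot _ (by show P.pt (min 0 P.N) = s; rw [show min 0 P.N = 0 by omega, P.first])
  · exact hsymm_bot _ (by show Q.pt (min 0 Q.N) = s; rw [show min 0 Q.N = 0 by omega, Q.first])
  · exact hsymm_top _ (by show P.pt (min P.N P.N) = t; rw [min_self, P.last])
  · exact hsymm_top _ (by show Q.pt (min Q.N Q.N) = t; rw [min_self, Q.last])
  · -- aP monotone
    intro j hj
    refine Fin.le_def.mp (e.symm.monotone ?_)
    show (⟨P.pt (min j P.N), _⟩ : pts) ≤ ⟨P.pt (min (j + 1) P.N), _⟩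
    rw [Subtype.mk_le_mk]
    exact P.pt_le (by omega) (by omega)
  · intro j hj
    refine Fin.le_def.mp (e.symm.monotone ?_)
    show (⟨Q.pt (min j Q.N), _⟩ : pts) ≤ ⟨Q.pt (min (j + 1) Q.N), _⟩
    rw [Subtype.mk_le_mk]
    exact Q.pt_le (by omega) (by omega)
  · -- R.pt (aP j) = P.pt j
    intro j hj
    rw [hRsymm]
    show P.pt (min j P.N) = P.pt j
    rw [min_eq_left hj]
  · intro j hj
    rw [hRsymm]
    show Q.pt (min j Q.N) = Q.pt j
    rw [min_eq_left hj]

end S4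
namespace S4

open Finset

/-- concatenation of subdivisions -/
noncomputable def concat {s t u : ℝ} (P : Subdivision s t) (Q : Subdivision t u) :
    Subdivision s u where
  N := P.N + Q.N
  pt := fun i => if i ≤ P.N then P.pt i else Q.pt (i - P.N)
  pos := by have := P.pos; omega
  first := by
    show (if 0 ≤ P.N then P.pt 0 else Q.pt (0 - P.N)) = s
    rw [if_pos (Nat.zero_le _)]; exact P.first
  last := by
    show (if P.N + Q.N ≤ P.N then P.pt (P.N + Q.N) else Q.pt (P.N + Q.N - P.N)) = u
    rw [if_neg (by have := Q.pos; omega), show P.N + Q.N - P.N = Q.N by omega]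
    exact Q.last
  mono := by
    intro i hi
    show (if i ≤ P.N then P.pt i else Q.pt (i - P.N))
      ≤ (if i + 1 ≤ P.N then P.pt (i + 1) else Q.pt (i + 1 - P.N))
    split_ifs with h1 h2 h2
    · exact P.pt_le (by omega) (by omega)
    · have hi' : i = P.N := by omega
      subst hi'
      calc P.pt P.N = t := P.last
      _ = Q.pt 0 := Q.first.symm
      _ ≤ Q.pt (P.N + 1 - P.N) := Q.pt_le (by omega) (by have := Q.pos; omega)
    · exact absurd h2 (by omega)
    · exact Q.pt_le (by omega) (by omega)

theorem concat_pt_left {s t u : ℝ} (P : Subdivision s t) (Q : Subdivision t u) {i : ℕ}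
    (hi : i ≤ P.N) : (concat P Q).pt i = P.pt i := if_pos hi

theorem concat_pt_shift {s t u : ℝ} (P : Subdivision s t) (Q : Subdivision t u) (k : ℕ) :
    (concat P Q).pt (P.N + k) = Q.pt k := by
  rcases Nat.eq_zero_or_pos k with rfl | hk
  · show (if P.N + 0 ≤ P.N then P.pt (P.N + 0) else Q.pt (P.N + 0 - P.N)) = Q.pt 0
    rw [if_pos (by omega), Nat.add_zero, P.last, Q.first]
  · show (if P.N + k ≤ P.N then P.pt (P.N + k) else Q.pt (P.N + k - P.N)) = Q.pt k
    rw [if_neg (by omega), show P.N + k - P.N = k by omega]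

variable {V : Type u} [NormedAddCommGroup V] [NormedSpace ℝ V]

theorem RS_concat (Ω G : ℝ → V →L[ℝ] V) {s t u : ℝ} (P : Subdivision s t)
    (Q : Subdivision t u) : RS Ω G (concat P Q) = RS Ω G P + RS Ω G Q := by
  rw [RS, RS, RS, show (concat P Q).N = P.N + Q.N from rfl, Finset.range_eq_Ico,
    ← Finset.sum_Ico_consecutive _ (Nat.zero_le P.N) (by omega : P.N ≤ P.N + Q.N),
    ← Finset.range_eq_Ico]
  congr 1
  · refine Finset.sum_congr rfl fun i hi => ?_
    have hiN := Finset.mem_range.mp hi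
    rw [concat_pt_left P Q (by omega), concat_pt_left P Q (by omega)]
  · rw [Finset.sum_Ico_eq_sum_range, show P.N + Q.N - P.N = Q.N by omega]
    refine Finset.sum_congr rfl fun k hk => ?_
    rw [show P.N + k + 1 = P.N + (k + 1) by omega, concat_pt_shift, concat_pt_shift]

theorem concat_mesh_lt {s t u : ℝ} (P : Subdivision s t) (Q : Subdivision t u) {δ : ℝ}
    (hP : P.mesh < δ) (hQ : Q.mesh < δ) : (concat P Q).mesh < δ := by
  rw [mesh_lt_iff]
  intro i hi
  have hi' : i < P.N + Q.N := hi
  rcases lt_or_ge i P.N with h | h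
  · rw [concat_pt_left P Q (by omega), concat_pt_left P Q (by omega)]
    exact (mesh_lt_iff P).mp hP i h
  · obtain ⟨k, rfl⟩ : ∃ k, i = P.N + k := ⟨i - P.N, by omega⟩
    rw [show P.N + k + 1 = P.N + (k + 1) by omega, concat_pt_shift, concat_pt_shift]
    exact (mesh_lt_iff Q).mp hQ k (by omega)

theorem RSLimit_def {Ω G : ℝ → V →L[ℝ] V} {s t : ℝ} {L : V →L[ℝ] V} :
    RSLimit Ω G s t L ↔ ∀ ε > (0:ℝ), ∃ δ > (0:ℝ), ∀ P : Subdivision s t,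
      P.mesh < δ → ‖RS Ω G P - L‖ ≤ ε := Iff.rfl

theorem RSLimit_self (Ω G : ℝ → V →L[ℝ] V) (s : ℝ) : RSLimit Ω G s s 0 := by
  intro ε hε
  refine ⟨1, one_pos, fun P _ => ?_⟩
  have hz : ∀ i ∈ Finset.range P.N,
      (Ω (P.pt (i + 1)) - Ω (P.pt i)).comp (G (P.pt i)) = 0 := by
    intro i hi
    have hiN := Finset.mem_range.mp hi
    have h1 : P.pt i = s := le_antisymm (P.pt_le_t (by omega)) (P.pt_ge_s (by omega))
    have h2 : P.pt (i + 1) = s := le_antisymm (P.pt_le_t (by omega)) (P.pt_ge_s (by omega))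
    rw [h1, h2, sub_self, ContinuousLinearMap.zero_comp]
  rw [Finset.sum_eq_zero hz, sub_zero, norm_zero]
  exact le_of_lt hε

theorem RSLimit_unique {Ω G : ℝ → V →L[ℝ] V} {s t : ℝ} {L L' : V →L[ℝ] V} (hst : s ≤ t)
    (h1 : RSLimit Ω G s t L) (h2 : RSLimit Ω G s t L') : L = L' := by
  have key : ∀ ε > (0:ℝ), ‖L - L'‖ ≤ 2 * ε := by
    intro ε hε
    obtain ⟨δ1, hδ1, hP1⟩ := h1 ε hε
    obtain ⟨δ2, hδ2, hP2⟩ := h2 ε hε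
    obtain ⟨k, -, hk⟩ := exists_unif_mesh_lt s t hst (lt_min hδ1 hδ2) 0
    have e1 := hP1 _ (lt_of_lt_of_le hk (min_le_left _ _))
    have e2 := hP2 _ (lt_of_lt_of_le hk (min_le_right _ _))
    have : L - L' = (RS Ω G (unif s t hst k) - L') - (RS Ω G (unif s t hst k) - L) := by abel
    rw [this]
    calc ‖_ - _‖ ≤ ‖RS Ω G (unif s t hst k) - L'‖ + ‖RS Ω G (unif s t hst k) - L‖ :=
      norm_sub_le _ _
    _ ≤ 2 * ε := by
      have e1' : ‖RS Ω G (unif s t hst k) - L‖ ≤ ε := e1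
      have e2' : ‖RS Ω G (unif s t hst k) - L'‖ ≤ ε := e2
      linarith
  have hle : ‖L - L'‖ ≤ 0 := by
    by_contra hc
    push_neg at hc
    have := key (‖L - L'‖ / 4) (by linarith)
    linarith
  have := norm_le_zero_iff.mp hle
  exact sub_eq_zero.mp this

/-- terms of a power sum bounded via smallness -/
theorem sum_pow_small {q : ℝ} (hq1 : 1 ≤ q) (hq2 : q < 2)
    {ω : ℝ → ℝ → ℝ} (hω : IsControl ω) {s t : ℝ} (hs : 0 ≤ s) (ht : t ≤ 1)
    {η : ℝ} (hη : 0 ≤ η) (P : Subdivision s t)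
    (hPη : ∀ j, j < P.N → ω (P.pt j) (P.pt (j + 1)) ≤ η) :
    ∑ j ∈ Finset.range P.N, ω (P.pt j) (P.pt (j + 1)) ^ ((2:ℝ)/q)
      ≤ η ^ ((2:ℝ)/q - 1) * ω s t := by
  have hq0 : 0 < q := by linarith
  have hθ1 : 0 ≤ (2:ℝ)/q - 1 := by
    rw [sub_nonneg, le_div_iff₀ hq0]; linarith
  have hchain : ∑ j ∈ Finset.range P.N, ω (P.pt j) (P.pt (j + 1)) ≤ ω s t := by
    have := control_chain hω P.N P.pt (fun j hj => P.mono j hj)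
      (by rw [P.first]; exact hs) (by rw [P.last]; exact ht)
    rwa [P.first, P.last] at this
  calc ∑ j ∈ Finset.range P.N, ω (P.pt j) (P.pt (j + 1)) ^ ((2:ℝ)/q)
      ≤ ∑ j ∈ Finset.range P.N, η ^ ((2:ℝ)/q - 1) * ω (P.pt j) (P.pt (j + 1)) := by
        refine Finset.sum_le_sum fun j hj => ?_
        have hjN := Finset.mem_range.mp hj
        have hω0 : 0 ≤ ω (P.pt j) (P.pt (j + 1)) :=
          hω.2.2.1 _ _ (le_trans hs (P.pt_ge_s (by omega))) (P.pt_le (by omega) (by omega))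
            (le_trans (P.pt_le_t (by omega)) ht)
        rcases eq_or_lt_of_le hω0 with heq | hpos
        · rw [← heq, Real.zero_rpow (by positivity), mul_zero]
        · have hsplit : ω (P.pt j) (P.pt (j + 1)) ^ ((2:ℝ)/q)
              = ω (P.pt j) (P.pt (j + 1)) ^ ((2:ℝ)/q - 1) * ω (P.pt j) (P.pt (j + 1)) := by
            rw [← Real.rpow_add_one (ne_of_gt hpos) ((2:ℝ)/q - 1)]
            congr 1
            ring
          rw [hsplit]
          exact mul_le_mul_of_nonneg_right (Real.rpow_le_rpow hω0 (hPη j hjN) hθ1) hω0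
  _ = η ^ ((2:ℝ)/q - 1) * ∑ j ∈ Finset.range P.N, ω (P.pt j) (P.pt (j + 1)) := by
        rw [Finset.mul_sum]
  _ ≤ η ^ ((2:ℝ)/q - 1) * ω s t :=
        mul_le_mul_of_nonneg_left hchain (Real.rpow_nonneg hη _)

/-- two subdivisions with `ω`-small intervals have close RS sums -/
theorem RS_close {q : ℝ} (hq1 : 1 ≤ q) (hq2 : q < 2)
    {ω : ℝ → ℝ → ℝ} (hω : IsControl ω) {Ω : ℝ → V →L[ℝ] V}
    (hΩ : ∀ a b, 0 ≤ a → a ≤ b → b ≤ 1 → ‖Ω b - Ω a‖ ≤ ω a b ^ (1 / q))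
    {s t : ℝ} (hs : 0 ≤ s) (hst : s < t) (ht : t ≤ 1)
    {G : ℝ → V →L[ℝ] V} {C : ℝ} (hC : 0 ≤ C)
    (hG : ∀ a b, s ≤ a → a ≤ b → b ≤ t → ‖G b - G a‖ ≤ C * ω a b ^ (1 / q))
    {η : ℝ} (hη : 0 ≤ η) (P Q : Subdivision s t)
    (hPη : ∀ j, j < P.N → ω (P.pt j) (P.pt (j + 1)) ≤ η)
    (hQη : ∀ j, j < Q.N → ω (Q.pt j) (Q.pt (j + 1)) ≤ η) :
    ‖RS Ω G P - RS Ω G Q‖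
      ≤ 2 * (C * (2 ^ ((2:ℝ)/q) * zetaR (2/q)) * (η ^ ((2:ℝ)/q - 1) * ω s t)) := by
  obtain ⟨R, aP, aQ, haP0, haQ0, haPN, haQN, haPm, haQm, haPpt, haQpt⟩ :=
    common_refinement hst P Q
  have hD : 0 ≤ C * (2 ^ ((2:ℝ)/q) * zetaR (2/q)) := by
    have := zetaR_nonneg (θ := 2/q)
    positivity
  have h1 : ‖RS Ω G R - RS Ω G P‖ ≤ C * (2 ^ ((2:ℝ)/q) * zetaR (2/q)) *
      (η ^ ((2:ℝ)/q - 1) * ω s t) :=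
    le_trans (refine_close hq1 hq2 hω hΩ hs ht hC hG P R aP haP0 haPN haPm haPpt)
      (mul_le_mul_of_nonneg_left (sum_pow_small hq1 hq2 hω hs ht hη P hPη) hD)
  have h2 : ‖RS Ω G R - RS Ω G Q‖ ≤ C * (2 ^ ((2:ℝ)/q) * zetaR (2/q)) *
      (η ^ ((2:ℝ)/q - 1) * ω s t) :=
    le_trans (refine_close hq1 hq2 hω hΩ hs ht hC hG Q R aQ haQ0 haQN haQm haQpt)
      (mul_le_mul_of_nonneg_left (sum_pow_small hq1 hq2 hω hs ht hη Q hQη) hD)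
  have hdec : RS Ω G P - RS Ω G Q = (RS Ω G R - RS Ω G Q) - (RS Ω G R - RS Ω G P) := by abel
  rw [hdec]
  calc ‖_ - _‖ ≤ ‖RS Ω G R - RS Ω G Q‖ + ‖RS Ω G R - RS Ω G P‖ := norm_sub_le _ _
  _ ≤ _ := by linarith

end S4
namespace S4

open Finset Filter

theorem pow_small {A r : ℝ} (hA : 0 ≤ A) (hr : 0 < r) :
    ∀ ε > (0:ℝ), ∃ η > (0:ℝ), A * η ^ r ≤ ε := by
  intro ε hε
  refine ⟨(ε / (A + 1)) ^ (1 / r), Real.rpow_pos_of_pos (by positivity) _, ?_⟩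
  have h1 : ((ε / (A + 1)) ^ (1 / r)) ^ r = ε / (A + 1) := by
    rw [← Real.rpow_mul (by positivity), show 1 / r * r = 1 by field_simp, Real.rpow_one]
  rw [h1, show A * (ε / (A + 1)) = A * ε / (A + 1) from (mul_div_assoc _ _ _).symm,
    div_le_iff₀ (by positivity)]
  nlinarith

theorem small_of_mesh {ω : ℝ → ℝ → ℝ} {t δ η : ℝ} (ht1 : t ≤ 1)
    (hδ' : ∀ a b, 0 ≤ a → a ≤ b → b ≤ 1 → b - a < δ → ω a b < η)
    (P : Subdivision 0 t) (hmesh : P.mesh < δ) :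
    ∀ j, j < P.N → ω (P.pt j) (P.pt (j + 1)) ≤ η := by
  intro j hj
  exact le_of_lt (hδ' _ _ (P.pt_ge_s (by omega)) (P.pt_le (by omega) (by omega))
    (le_trans (P.pt_le_t (by omega)) ht1) ((mesh_lt_iff P).mp hmesh j hj))

variable {V : Type u} [NormedAddCommGroup V] [NormedSpace ℝ V] [CompleteSpace V]

theorem limit_exists {q : ℝ} (hq1 : 1 ≤ q) (hq2 : q < 2)
    {ω : ℝ → ℝ → ℝ} (hω : IsControl ω) {Ω : ℝ → V →L[ℝ] V}
    (hΩ : ∀ a b, 0 ≤ a → a ≤ b → b ≤ 1 → ‖Ω b - Ω a‖ ≤ ω a b ^ (1 / q))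
    {t : ℝ} (ht0 : 0 ≤ t) (ht1 : t ≤ 1)
    {G : ℝ → V →L[ℝ] V} {C : ℝ} (hC : 0 ≤ C)
    (hG : ∀ a b, 0 ≤ a → a ≤ b → b ≤ t → ‖G b - G a‖ ≤ C * ω a b ^ (1 / q)) :
    ∃ L, RSLimit Ω G 0 t L := by
  have hq0 : 0 < q := by linarith
  rcases eq_or_lt_of_le ht0 with heq | htpos
  · exact ⟨0, by rw [← heq]; exact RSLimit_self Ω G 0⟩
  have hW : 0 ≤ ω 0 t := hω.2.2.1 0 t le_rfl ht0 ht1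
  have hζ : 0 ≤ zetaR (2/q) := zetaR_nonneg
  have hr : 0 < (2:ℝ)/q - 1 := by
    rw [sub_pos, lt_div_iff₀ hq0]; linarith
  -- uniform closeness of fine sums
  have haux : ∀ ε > (0:ℝ), ∃ δ > (0:ℝ), ∀ P Q : Subdivision 0 t,
      P.mesh < δ → Q.mesh < δ → ‖RS Ω G P - RS Ω G Q‖ ≤ ε := by
    intro ε hε
    obtain ⟨η, hη, hηle⟩ := pow_small
      (A := 2 * (C * (2 ^ ((2:ℝ)/q) * zetaR (2/q))) * ω 0 t) (by positivity) hr ε hε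
    obtain ⟨δ, hδ, hδ'⟩ := control_small hω hη
    refine ⟨δ, hδ, fun P Q hP hQ => ?_⟩
    calc ‖RS Ω G P - RS Ω G Q‖
        ≤ 2 * (C * (2 ^ ((2:ℝ)/q) * zetaR (2/q)) * (η ^ ((2:ℝ)/q - 1) * ω 0 t)) :=
          RS_close hq1 hq2 hω hΩ le_rfl htpos ht1 hC hG (le_of_lt hη) P Q
            (small_of_mesh ht1 hδ' P hP) (small_of_mesh ht1 hδ' Q hQ)
    _ = 2 * (C * (2 ^ ((2:ℝ)/q) * zetaR (2/q))) * ω 0 t * η ^ ((2:ℝ)/q - 1) := by ring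
    _ ≤ ε := hηle
  -- Cauchy sequence of uniform sums
  set S : ℕ → V →L[ℝ] V := fun k => RS Ω G (unif 0 t ht0 k) with hS
  have hcauchy : CauchySeq S := by
    rw [Metric.cauchySeq_iff]
    intro ε hε
    obtain ⟨δ, hδ, hδ'⟩ := haux (ε/2) (by linarith)
    obtain ⟨n, hn⟩ := exists_nat_gt ((t - 0) / δ)
    refine ⟨n, fun m hm k hk => ?_⟩
    have hmesh : ∀ j, n ≤ j → (unif 0 t ht0 j).mesh < δ := by
      intro j hj
      refine unif_mesh_lt 0 t ht0 j ?_
      rw [div_lt_iff₀ (by positivity)]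
      rw [div_lt_iff₀ hδ] at hn
      have : (n:ℝ) ≤ (j:ℝ) := by exact_mod_cast hj
      nlinarith
    rw [dist_eq_norm]
    calc ‖S m - S k‖ ≤ ε / 2 := hδ' _ _ (hmesh m hm) (hmesh k hk)
    _ < ε := by linarith
  obtain ⟨L, hL⟩ := cauchySeq_tendsto_of_complete hcauchy
  refine ⟨L, ?_⟩
  intro ε hε
  obtain ⟨δ, hδ, hδ'⟩ := haux (ε/2) (by linarith)
  refine ⟨δ, hδ, fun P hP => ?_⟩
  obtain ⟨K, hK⟩ := (Metric.tendsto_atTop.mp hL) (ε/2) (by linarith)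
  obtain ⟨k, hkK, hkmesh⟩ := exists_unif_mesh_lt 0 t ht0 hδ K
  have h1 : ‖RS Ω G P - S k‖ ≤ ε / 2 := hδ' _ _ hP hkmesh
  have h2 : ‖S k - L‖ < ε / 2 := by
    rw [← dist_eq_norm]
    exact hK k hkK
  calc ‖RS Ω G P - L‖ = ‖(RS Ω G P - S k) + (S k - L)‖ := by abel_nf
  _ ≤ ‖RS Ω G P - S k‖ + ‖S k - L‖ := norm_add_le _ _
  _ ≤ ε := by linarith

end S4
namespace S4

open Finset

variable {V : Type u} [NormedAddCommGroup V] [NormedSpace ℝ V]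

theorem step_bound {q T : ℝ} (hq1 : 1 ≤ q) (hq2 : q < 2) (hT1 : T ≤ 1)
    {ω : ℝ → ℝ → ℝ} (hω : IsControl ω) {Ω : ℝ → V →L[ℝ] V}
    (hΩ : ∀ a b, 0 ≤ a → a ≤ b → b ≤ 1 → ‖Ω b - Ω a‖ ≤ ω a b ^ (1 / q))
    {G : ℝ → V →L[ℝ] V} {C B : ℝ} (hC : 0 ≤ C) (hB : 0 ≤ B)
    (hG : ∀ a b, 0 ≤ a → a ≤ b → b ≤ T → ‖G b - G a‖ ≤ C * ω a b ^ (1 / q))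
    (hGB : ∀ a, 0 ≤ a → a ≤ T → ‖G a‖ ≤ B)
    {J : ℝ → V →L[ℝ] V} (hJ : ∀ r, 0 ≤ r → r ≤ T → RSLimit Ω G 0 r (J r)) :
    ∀ s t, 0 ≤ s → s ≤ t → t ≤ T →
      ‖J t - J s‖
        ≤ (B + C * (2 ^ ((2:ℝ)/q) * zetaR (2/q)) * ω 0 T ^ (1 / q)) * ω s t ^ (1 / q) := by
  intro s t hs hst htT
  have hq0 : 0 < q := by linarith
  have ht1 : t ≤ 1 := le_trans htT hT1
  have hωst : 0 ≤ ω s t := hω.2.2.1 s t hs hst ht1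
  have hζ : 0 ≤ zetaR (2/q) := zetaR_nonneg
  have hω0T : 0 ≤ ω 0 T := hω.2.2.1 0 T le_rfl (by linarith) hT1
  set D : ℝ := 2 ^ ((2:ℝ)/q) * zetaR (2/q) with hD
  have hD0 : 0 ≤ D := by positivity
  -- ε-approximation
  have key : ∀ ε > (0:ℝ),
      ‖J t - J s‖ ≤ B * ω s t ^ (1/q) + C * D * ω s t ^ ((2:ℝ)/q) + 2 * ε := by
    intro ε hε
    obtain ⟨δt, hδt, hPt⟩ := hJ t (by linarith) htT ε hε
    obtain ⟨δs, hδs, hPs⟩ := hJ s hs (by linarith) ε hε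
    have hδ : (0:ℝ) < min δt δs := lt_min hδt hδs
    obtain ⟨kP, -, hkP⟩ := exists_unif_mesh_lt 0 s hs hδ 0
    obtain ⟨kQ, -, hkQ⟩ := exists_unif_mesh_lt s t hst hδ 0
    set P := unif 0 s hs kP with hPdef
    set Q := unif s t hst kQ with hQdef
    set R := concat P Q with hRdef
    have hRmesh : R.mesh < δt :=
      lt_of_lt_of_le (concat_mesh_lt P Q hkP hkQ) (min_le_left _ _)
    have hPmesh : P.mesh < δs := lt_of_lt_of_le hkP (min_le_right _ _)
    have e1 : ‖RS Ω G R - J t‖ ≤ ε := hPt R hRmesh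
    have e2 : ‖RS Ω G P - J s‖ ≤ ε := hPs P hPmesh
    set Ξ : V →L[ℝ] V := (Ω t - Ω s).comp (G s) with hΞ
    have e3 : ‖RS Ω G Q - Ξ‖ ≤ C * D * ω s t ^ ((2:ℝ)/q) := by
      have := maximal hq1 hq2 hω hΩ hs ht1 hC
        (fun a b ha hab hb => hG a b (le_trans hs ha) hab (le_trans hb htT)) Q
      calc ‖RS Ω G Q - Ξ‖ ≤ C * (2 ^ ((2:ℝ)/q) * zetaR (2/q)) * ω s t ^ ((2:ℝ)/q) := this
      _ = C * D * ω s t ^ ((2:ℝ)/q) := by rw [hD]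
    have e4 : ‖Ξ‖ ≤ B * ω s t ^ (1/q) := by
      rw [hΞ]
      have h4a : ‖Ω t - Ω s‖ * ‖G s‖ ≤ ω s t ^ (1/q) * B :=
        mul_le_mul (hΩ s t hs hst ht1) (hGB s (by linarith) (le_trans hst htT)) (norm_nonneg _)
          (Real.rpow_nonneg hωst _)
      refine le_trans (ContinuousLinearMap.opNorm_comp_le _ _) (le_trans h4a (le_of_eq ?_))
      ring
    have hRS : RS Ω G R = RS Ω G P + RS Ω G Q := RS_concat Ω G P Q
    have hdec : J t - J s
        = -(RS Ω G R - J t) + (RS Ω G P - J s) + (RS Ω G Q - Ξ) + Ξ := by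
      rw [hRS]; abel
    calc ‖J t - J s‖
        = ‖-(RS Ω G R - J t) + (RS Ω G P - J s) + (RS Ω G Q - Ξ) + Ξ‖ := by rw [hdec]
    _ ≤ ‖-(RS Ω G R - J t) + (RS Ω G P - J s) + (RS Ω G Q - Ξ)‖ + ‖Ξ‖ := norm_add_le _ _
    _ ≤ (‖-(RS Ω G R - J t) + (RS Ω G P - J s)‖ + ‖RS Ω G Q - Ξ‖) + ‖Ξ‖ :=
        add_le_add_left (norm_add_le _ _) _
    _ ≤ ((‖-(RS Ω G R - J t)‖ + ‖RS Ω G P - J s‖) + ‖RS Ω G Q - Ξ‖) + ‖Ξ‖ :=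
        add_le_add_left (add_le_add_left (norm_add_le _ _) _) _
    _ ≤ B * ω s t ^ (1/q) + C * D * ω s t ^ ((2:ℝ)/q) + 2 * ε := by
        rw [norm_neg]
        linarith
  have hmain : ‖J t - J s‖ ≤ B * ω s t ^ (1/q) + C * D * ω s t ^ ((2:ℝ)/q) := by
    refine le_of_forall_pos_le_add fun ε hε => ?_
    have := key (ε / 2) (by linarith)
    linarith
  refine le_trans hmain ?_
  have hθsplit : ω s t ^ ((2:ℝ)/q) = ω s t ^ ((1:ℝ)/q) * ω s t ^ ((1:ℝ)/q) := by
    rw [show (2:ℝ)/q = 1/q + 1/q by ring,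
      Real.rpow_add' hωst (by positivity : (1:ℝ)/q + 1/q ≠ 0)]
  have hp1 : ω s t ^ ((1:ℝ)/q) ≤ ω 0 T ^ ((1:ℝ)/q) :=
    Real.rpow_le_rpow hωst (control_mono hω le_rfl hs hst htT hT1) (by positivity)
  have hp0 : 0 ≤ ω s t ^ ((1:ℝ)/q) := Real.rpow_nonneg hωst _
  rw [hθsplit]
  have hCD : 0 ≤ C * D := mul_nonneg hC hD0
  nlinarith [mul_le_mul_of_nonneg_left hp1 hCD, Real.rpow_nonneg hω0T ((1:ℝ)/q)]

variable [CompleteSpace V]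

open scoped Classical in
/-- the integration map: `Jmap Ω G t = ∫_0^t dΩ · G` (or junk if the limit fails to exist) -/
noncomputable def Jmap (Ω G : ℝ → V →L[ℝ] V) : ℝ → V →L[ℝ] V := fun t =>
  if h : ∃ L, RSLimit Ω G 0 t L then h.choose else 0

theorem Jmap_limit {Ω G : ℝ → V →L[ℝ] V} {t : ℝ} (h : ∃ L, RSLimit Ω G 0 t L) :
    RSLimit Ω G 0 t (Jmap Ω G t) := by
  classical
  unfold Jmap
  rw [dif_pos h]
  exact h.choose_spec

theorem Jmap_zero (Ω G : ℝ → V →L[ℝ] V) : Jmap Ω G 0 = 0 :=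
  RSLimit_unique le_rfl (Jmap_limit ⟨0, RSLimit_self Ω G 0⟩) (RSLimit_self Ω G 0)

/-- the iterated integrals -/
noncomputable def Iter (Ω : ℝ → V →L[ℝ] V) : ℕ → ℝ → V →L[ℝ] V
  | 0 => fun _ => ContinuousLinearMap.id ℝ V
  | (n + 1) => Jmap Ω (Iter Ω n)

end S4
/-- The iterated Young integrals `I^0 = Id`, `I^{n+1}(t) = ∫_0^t dΩ · I^n`
exist on `[0,T]` and satisfy `‖I^n(t) − I^n(s)‖ ≤ K^{n−1} ω(s,t)^{1/q}` with
`K = ω(0,T)^{1/q} (1 + 2^{2/q} ζ(2/q))`. -/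
theorem statement4 (q T : ℝ) (hq1 : 1 ≤ q) (hq2 : q < 2) (hT0 : 0 < T) (hT1 : T ≤ 1)
    (V : Type u) [NormedAddCommGroup V] [NormedSpace ℝ V] [CompleteSpace V]
    (ω : ℝ → ℝ → ℝ) (hω : IsControl ω)
    (Ω : ℝ → V →L[ℝ] V)
    (hΩ : ∀ s t, 0 ≤ s → s ≤ t → t ≤ 1 → ‖Ω t - Ω s‖ ≤ ω s t ^ (1 / q)) :
    ∃ I : ℕ → ℝ → V →L[ℝ] V,
      (∀ t, I 0 t = ContinuousLinearMap.id ℝ V) ∧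
      (∀ n, I (n + 1) 0 = 0) ∧
      (∀ n t, 0 ≤ t → t ≤ T → RSLimit Ω (I n) 0 t (I (n + 1) t)) ∧
      (∀ n, 1 ≤ n → ∀ s t, 0 ≤ s → s ≤ t → t ≤ T →
        ‖I n t - I n s‖
          ≤ (ω 0 T ^ (1 / q) * (1 + 2 ^ ((2 : ℝ) / q) * zetaR (2 / q))) ^ (n - 1)
            * ω s t ^ (1 / q)) := by
  classical
  have hq0 : 0 < q := by linarith
  have hω0T : 0 ≤ ω 0 T := hω.2.2.1 0 T le_rfl (le_of_lt hT0) hT1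
  have hζ : 0 ≤ zetaR (2 / q) := S4.zetaR_nonneg
  set K : ℝ := ω 0 T ^ (1 / q) * (1 + 2 ^ ((2 : ℝ) / q) * zetaR (2 / q)) with hK
  have hK0 : 0 ≤ K := by
    rw [hK]
    have h1 : 0 ≤ ω 0 T ^ (1 / q) := Real.rpow_nonneg hω0T _
    have h2 : (0:ℝ) ≤ 2 ^ ((2:ℝ)/q) := by positivity
    exact mul_nonneg h1 (add_nonneg zero_le_one (mul_nonneg h2 hζ))
  -- the recursively defined iterated integrals
  set I : ℕ → ℝ → V →L[ℝ] V := S4.Iter Ω with hI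
  have hI0 : ∀ r : ℝ, I 0 r = ContinuousLinearMap.id ℝ V := fun _ => rfl
  have hIsucc : ∀ n, I (n + 1) = S4.Jmap Ω (I n) := fun _ => rfl
  -- a single step of the construction
  have build : ∀ (G : ℝ → V →L[ℝ] V) (C B : ℝ), 0 ≤ C → 0 ≤ B →
      (∀ a b, 0 ≤ a → a ≤ b → b ≤ T → ‖G b - G a‖ ≤ C * ω a b ^ (1 / q)) →
      (∀ a, 0 ≤ a → a ≤ T → ‖G a‖ ≤ B) →
      (∀ r, 0 ≤ r → r ≤ T → RSLimit Ω G 0 r (S4.Jmap Ω G r)) ∧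
      S4.Jmap Ω G 0 = 0 ∧
      (∀ s t, 0 ≤ s → s ≤ t → t ≤ T → ‖S4.Jmap Ω G t - S4.Jmap Ω G s‖
        ≤ (B + C * (2 ^ ((2:ℝ)/q) * zetaR (2/q)) * ω 0 T ^ (1 / q)) * ω s t ^ (1 / q)) := by
    intro G C B hC hB hG hGB
    have hlim : ∀ r, 0 ≤ r → r ≤ T → RSLimit Ω G 0 r (S4.Jmap Ω G r) := by
      intro r hr hrT
      refine S4.Jmap_limit (S4.limit_exists hq1 hq2 hω hΩ hr (le_trans hrT hT1) hC ?_)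
      exact fun a b ha hab hb => hG a b ha hab (le_trans hb hrT)
    exact ⟨hlim, S4.Jmap_zero Ω G,
      S4.step_bound hq1 hq2 hT1 hω hΩ hC hB hG hGB hlim⟩
  -- the inductive invariant
  have main : ∀ n, (∀ r, 0 ≤ r → r ≤ T → RSLimit Ω (I n) 0 r (I (n + 1) r)) ∧
      I (n + 1) 0 = 0 ∧
      (∀ s t, 0 ≤ s → s ≤ t → t ≤ T →
        ‖I (n + 1) t - I (n + 1) s‖ ≤ K ^ n * ω s t ^ (1 / q)) := by
    intro n
    induction n with
    | zero =>
      have hG : ∀ a b, 0 ≤ a → a ≤ b → b ≤ T →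
          ‖I 0 b - I 0 a‖ ≤ 0 * ω a b ^ (1 / q) := by
        intro a b _ _ _
        rw [hI0, hI0, sub_self, norm_zero, zero_mul]
      have hGB : ∀ a, 0 ≤ a → a ≤ T → ‖I 0 a‖ ≤ 1 := by
        intro a _ _
        rw [hI0]
        exact ContinuousLinearMap.norm_id_le
      obtain ⟨h1, h2, h3⟩ := build (I 0) 0 1 le_rfl zero_le_one hG hGB
      rw [← hIsucc 0] at h1 h2 h3
      refine ⟨h1, h2, fun s t hs hst htT => ?_⟩
      have := h3 s t hs hst htT
      calc ‖I 1 t - I 1 s‖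
          ≤ (1 + 0 * (2 ^ ((2:ℝ)/q) * zetaR (2/q)) * ω 0 T ^ (1 / q)) * ω s t ^ (1 / q) := this
      _ = K ^ 0 * ω s t ^ (1 / q) := by rw [pow_zero]; ring
    | succ n ih =>
      obtain ⟨ihlim, ihzero, ihbound⟩ := ih
      have hC : (0:ℝ) ≤ K ^ n := pow_nonneg hK0 n
      have hG : ∀ a b, 0 ≤ a → a ≤ b → b ≤ T →
          ‖I (n + 1) b - I (n + 1) a‖ ≤ K ^ n * ω a b ^ (1 / q) :=
        fun a b ha hab hb => ihbound a b ha hab hb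
      have hGB : ∀ a, 0 ≤ a → a ≤ T → ‖I (n + 1) a‖ ≤ K ^ n * ω 0 T ^ (1 / q) := by
        intro a ha haT
        have h1 : ‖I (n + 1) a - I (n + 1) 0‖ ≤ K ^ n * ω 0 a ^ (1 / q) :=
          ihbound 0 a le_rfl ha haT
        rw [ihzero, sub_zero] at h1
        refine le_trans h1 (mul_le_mul_of_nonneg_left ?_ hC)
        exact Real.rpow_le_rpow (hω.2.2.1 0 a le_rfl ha (le_trans haT hT1))
          (S4.control_mono hω le_rfl le_rfl ha haT hT1) (by positivity)
      obtain ⟨h1, h2, h3⟩ := build (I (n + 1)) (K ^ n) (K ^ n * ω 0 T ^ (1 / q)) hC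
        (mul_nonneg hC (Real.rpow_nonneg hω0T _)) hG hGB
      rw [← hIsucc (n + 1)] at h1 h2 h3
      refine ⟨h1, h2, fun s t hs hst htT => ?_⟩
      have := h3 s t hs hst htT
      calc ‖I (n + 2) t - I (n + 2) s‖
          ≤ (K ^ n * ω 0 T ^ (1 / q) + K ^ n * (2 ^ ((2:ℝ)/q) * zetaR (2/q)) * ω 0 T ^ (1 / q))
              * ω s t ^ (1 / q) := this
      _ = K ^ (n + 1) * ω s t ^ (1 / q) := by
            rw [pow_succ, hK]
            ring
  refine ⟨I, hI0, fun n => (main n).2.1, fun n r hr hrT => (main n).1 r hr hrT,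
    fun n hn s t hs hst htT => ?_⟩
  obtain ⟨m, rfl⟩ : ∃ m, n = m + 1 := ⟨n - 1, by omega⟩
  rw [show m + 1 - 1 = m by omega]
  exact (main m).2.2 s t hs hst htT
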